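/- arXiv:1904.08925 — 5 statements merged into one kernel-verified Lean document; each statement's English description precedes it below -/
import Mathlib

section
/- Let d ≥ 2 be an integer, let tcb, tcs be transaction cost rates with 0 ≤ tcb < 1 and 0 ≤ tcs < 1, let π_1,…,π_d be nonnegative reals with ∑_{i=1}^d π_i = 1, let c_1,…,c_d be nonnegative reals, and let D̂ ≥ 0. Define h(c) = (1+tcb)·∑_{i=1}^d (c−c_i)^+·π_i − (1−tcs)·∑_{i=1}^d (c_i−c)^+·π_i and D̂_j = h(c_j). Suppose j ∈ {1,…,d} satisfies D̂_j ≤ D̂ and D̂_i ≤ D̂_j for every i ∈ {1,…,d} with D̂_i ≤ D̂. Then the real number c = [(1+tcb)·∑_{i=1}^d c_i·π_i·1_{c_i ≤ c_j} + (1−tcs)·∑_{i=1}^d c_i·π_i·1_{c_i > c_j} + D̂] / [(1+tcb)·∑_{i=1}^d π_i·1_{c_i ≤ c_j} + (1−tcs)·∑_{i=1}^d π_i·1_{c_i > c_j}] satisfies h(c) = D̂, and it is the unique real number with this property. -/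
/-- Per-asset monotonicity estimate: the one-asset cost function increases at
rate at least `min (1+tcb) (1-tcs)`. -/
lemma stmt0_Fmono (tcb tcs c a b : ℝ) (h1 : 0 ≤ tcb) (h2 : 0 ≤ tcs) (hab : a ≤ b) :
    (1+tcb) * max (a-c) 0 - (1-tcs) * max (c-a) 0 + min (1+tcb) (1-tcs) * (b-a)
      ≤ (1+tcb) * max (b-c) 0 - (1-tcs) * max (c-b) 0 := by
  have hm1 : min (1+tcb) (1-tcs) ≤ 1+tcb := min_le_left _ _
  have hm2 : min (1+tcb) (1-tcs) ≤ 1-tcs := min_le_right _ _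
  rcases le_total c a with ha | ha <;> rcases le_total c b with hb | hb
  · rw [max_eq_left (by linarith : (0:ℝ) ≤ a - c), max_eq_right (by linarith : c - a ≤ (0:ℝ)),
      max_eq_left (by linarith : (0:ℝ) ≤ b - c), max_eq_right (by linarith : c - b ≤ (0:ℝ))]
    nlinarith [mul_le_mul_of_nonneg_right hm1 (by linarith : (0:ℝ) ≤ b - a)]
  · rw [max_eq_left (by linarith : (0:ℝ) ≤ a - c), max_eq_right (by linarith : c - a ≤ (0:ℝ)),
      max_eq_right (by linarith : b - c ≤ (0:ℝ)), max_eq_left (by linarith : (0:ℝ) ≤ c - b)]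
    nlinarith [mul_le_mul_of_nonneg_right hm1 (by linarith : (0:ℝ) ≤ b - a)]
  · rw [max_eq_right (by linarith : a - c ≤ (0:ℝ)), max_eq_left (by linarith : (0:ℝ) ≤ c - a),
      max_eq_left (by linarith : (0:ℝ) ≤ b - c), max_eq_right (by linarith : c - b ≤ (0:ℝ))]
    nlinarith [mul_le_mul_of_nonneg_right hm1 (by linarith : (0:ℝ) ≤ b - c),
      mul_le_mul_of_nonneg_right hm2 (by linarith : (0:ℝ) ≤ c - a)]
  · rw [max_eq_right (by linarith : a - c ≤ (0:ℝ)), max_eq_left (by linarith : (0:ℝ) ≤ c - a),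
      max_eq_right (by linarith : b - c ≤ (0:ℝ)), max_eq_left (by linarith : (0:ℝ) ≤ c - b)]
    nlinarith [mul_le_mul_of_nonneg_right hm2 (by linarith : (0:ℝ) ≤ b - a)]

/-- Proposition 1 of the paper: the explicit candidate `cstar` solves the
self-financing rebalancing equation `h c = D̂` and is the unique solution. -/
theorem stmt_0 (d : ℕ) (hd : 2 ≤ d)
    (tcb tcs : ℝ) (htcb0 : 0 ≤ tcb) (htcb1 : tcb < 1)
    (htcs0 : 0 ≤ tcs) (htcs1 : tcs < 1)
    (π cc : Fin d → ℝ) (hπ : ∀ i, 0 ≤ π i) (hπsum : ∑ i, π i = 1)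
    (hcc : ∀ i, 0 ≤ cc i)
    (Dh : ℝ) (hDh : 0 ≤ Dh)
    (h : ℝ → ℝ)
    (hdef : ∀ c, h c =
      (1 + tcb) * ∑ i, max (c - cc i) 0 * π i
        - (1 - tcs) * ∑ i, max (cc i - c) 0 * π i)
    (Dhat : Fin d → ℝ) (hDhat : ∀ i, Dhat i = h (cc i))
    (j : Fin d) (hj1 : Dhat j ≤ Dh)
    (hj2 : ∀ i, Dhat i ≤ Dh → Dhat i ≤ Dhat j)
    (cstar : ℝ)
    (hcstar : cstar =
      ((1 + tcb) * ∑ i, (if cc i ≤ cc j then cc i * π i else 0)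
        + (1 - tcs) * ∑ i, (if cc j < cc i then cc i * π i else 0) + Dh)
      / ((1 + tcb) * ∑ i, (if cc i ≤ cc j then π i else 0)
        + (1 - tcs) * ∑ i, (if cc j < cc i then π i else 0))) :
    h cstar = Dh ∧ ∀ c' : ℝ, h c' = Dh → c' = cstar := by
  -- abbreviations
  set s1 : ℝ := ∑ i, (if cc i ≤ cc j then π i else 0) with hs1def
  set s2 : ℝ := ∑ i, (if cc j < cc i then π i else 0) with hs2def
  set b1 : ℝ := ∑ i, (if cc i ≤ cc j then cc i * π i else 0) with hb1def
  set b2 : ℝ := ∑ i, (if cc j < cc i then cc i * π i else 0) with hb2def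
  set A : ℝ := (1+tcb) * s1 + (1-tcs) * s2 with hAdef
  set B : ℝ := (1+tcb) * b1 + (1-tcs) * b2 with hBdef
  set m : ℝ := min (1+tcb) (1-tcs) with hmdef
  have hm0 : 0 < m := lt_min (by linarith) (by linarith)
  -- h as a single sum
  have hsum : ∀ c, h c =
      ∑ i, ((1+tcb) * max (c - cc i) 0 - (1-tcs) * max (cc i - c) 0) * π i := by
    intro c
    rw [hdef c, Finset.mul_sum, Finset.mul_sum, ← Finset.sum_sub_distrib]
    exact Finset.sum_congr rfl fun i _ => by ring
  -- s1 + s2 = 1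
  have hs12 : s1 + s2 = 1 := by
    rw [hs1def, hs2def, ← Finset.sum_add_distrib, ← hπsum]
    refine Finset.sum_congr rfl fun i _ => ?_
    by_cases hci : cc i ≤ cc j
    · simp [hci, not_lt.mpr hci]
    · simp [hci, lt_of_not_ge hci]
  have hs1nn : 0 ≤ s1 := Finset.sum_nonneg fun i _ => by
    by_cases hci : cc i ≤ cc j <;> simp [hci, hπ i]
  -- A is positive
  have hA : 0 < A := by
    have h1 : (1-tcs) * s1 ≤ (1+tcb) * s1 :=
      mul_le_mul_of_nonneg_right (by linarith) hs1nn
    have : (1-tcs) * (s1 + s2) ≤ A := by rw [hAdef]; nlinarith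
    rw [hs12, mul_one] at this
    linarith
  -- A * c - B as a single sum
  have e1 : ∀ c, A * c - B =
      ∑ i, ((if cc i ≤ cc j then (1+tcb) else (1-tcs)) * ((c - cc i) * π i)) := by
    intro c
    have h2 : ∑ i, ((if cc i ≤ cc j then (1+tcb) else (1-tcs)) * ((c - cc i) * π i))
        = ∑ i, ((1+tcb) * (c * (if cc i ≤ cc j then π i else 0))
              - (1+tcb) * (if cc i ≤ cc j then cc i * π i else 0)
              + ((1-tcs) * (c * (if cc j < cc i then π i else 0))
              - (1-tcs) * (if cc j < cc i then cc i * π i else 0))) := by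
      refine Finset.sum_congr rfl fun i _ => ?_
      by_cases hci : cc i ≤ cc j
      · simp only [if_pos hci, if_neg (not_lt.mpr hci)]; ring
      · simp only [if_neg hci, if_pos (lt_of_not_ge hci)]; ring
    rw [h2, Finset.sum_add_distrib, Finset.sum_sub_distrib, Finset.sum_sub_distrib]
    simp only [← Finset.mul_sum, ← hs1def, ← hs2def, ← hb1def, ← hb2def]
    rw [hAdef, hBdef]; ring
  -- equality region: h c = A * c - B when cc j ≤ c ≤ every cc i > cc j
  have heq : ∀ c, cc j ≤ c → (∀ i, cc j < cc i → c ≤ cc i) → h c = A * c - B := by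
    intro c hc1 hc2
    rw [hsum c, e1 c]
    refine Finset.sum_congr rfl fun i _ => ?_
    by_cases hci : cc i ≤ cc j
    · rw [if_pos hci, max_eq_left (by linarith : (0:ℝ) ≤ c - cc i),
        max_eq_right (by linarith : cc i - c ≤ (0:ℝ))]
      ring
    · have hlt := lt_of_not_ge hci
      have hle := hc2 i hlt
      rw [if_neg hci, max_eq_right (by linarith : c - cc i ≤ (0:ℝ)),
        max_eq_left (by linarith : (0:ℝ) ≤ cc i - c)]
      ring
  -- strict monotonicity of h
  have hmono : ∀ a b : ℝ, a < b → h a < h b := by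
    intro a b hab
    have key : h a + m * (b - a) ≤ h b := by
      rw [hsum a, hsum b]
      have h1 : (∑ i, ((1+tcb) * max (a - cc i) 0 - (1-tcs) * max (cc i - a) 0) * π i)
            + m * (b - a)
          = ∑ i, (((1+tcb) * max (a - cc i) 0 - (1-tcs) * max (cc i - a) 0)
              + m * (b - a)) * π i := by
        have : ∑ i, (((1+tcb) * max (a - cc i) 0 - (1-tcs) * max (cc i - a) 0)
              + m * (b - a)) * π i
            = ∑ i, (((1+tcb) * max (a - cc i) 0 - (1-tcs) * max (cc i - a) 0) * π i
              + (m * (b - a)) * π i) := Finset.sum_congr rfl fun i _ => by ring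
        rw [this, Finset.sum_add_distrib, ← Finset.mul_sum, hπsum, mul_one]
      rw [h1]
      refine Finset.sum_le_sum fun i _ => ?_
      have hF := stmt0_Fmono tcb tcs (cc i) a b htcb0 htcs0 (le_of_lt hab)
      exact mul_le_mul_of_nonneg_right hF (hπ i)
    nlinarith [mul_pos hm0 (by linarith : (0:ℝ) < b - a)]
  -- h (cc j) = A * cc j - B
  have hcj_eq : h (cc j) = A * cc j - B :=
    heq (cc j) le_rfl (fun i hi => le_of_lt hi)
  -- A * cstar - B = Dh
  have hAcstar : A * cstar - B = Dh := by
    rw [hcstar]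
    field_simp
    ring
  -- cc j ≤ cstar
  have hcjle : cc j ≤ cstar := by
    have h1 : A * cc j - B ≤ A * cstar - B := by
      rw [hAcstar, ← hcj_eq, ← hDhat j]; exact hj1
    have h2 : A * cc j ≤ A * cstar := by linarith
    exact le_of_mul_le_mul_left h2 hA
  -- cstar ≤ cc i for every i with cc j < cc i
  have hupper : ∀ i, cc j < cc i → cstar ≤ cc i := by
    by_contra hcon
    push_neg at hcon
    obtain ⟨i0, hi0a, hi0b⟩ := hcon
    obtain ⟨k, hk_mem, hk_min⟩ := Finset.exists_min_image
      (Finset.univ.filter (fun i => cc j < cc i ∧ cc i < cstar)) cc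
      ⟨i0, by simp [hi0a, hi0b]⟩
    simp only [Finset.mem_filter, Finset.mem_univ, true_and] at hk_mem
    have hkcond : ∀ i, cc j < cc i → cc k ≤ cc i := by
      intro i hi
      rcases lt_or_ge (cc i) cstar with h' | h'
      · exact hk_min i (by simp [hi, h'])
      · linarith [hk_mem.2]
    have heqk : h (cc k) = A * cc k - B := heq (cc k) (le_of_lt hk_mem.1) hkcond
    have h1 : Dhat k ≤ Dh := by
      rw [hDhat k, heqk, ← hAcstar]
      nlinarith [hk_mem.2]
    have h2 := hj2 k h1
    have h3 : Dhat j < Dhat k := by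
      rw [hDhat j, hDhat k]; exact hmono _ _ hk_mem.1
    linarith
  have heqstar : h cstar = A * cstar - B := heq cstar hcjle hupper
  have hmain : h cstar = Dh := by rw [heqstar, hAcstar]
  refine ⟨hmain, fun c' hc' => ?_⟩
  rcases lt_trichotomy c' cstar with hlt | heq' | hgt
  · have := hmono _ _ hlt; rw [hc', hmain] at this; linarith
  · exact heq'
  · have := hmono _ _ hgt; rw [hc', hmain] at this; linarith
end

section
/- Let d ≥ 2 be an integer, let tcb, tcs be reals with 0 ≤ tcb and 0 ≤ tcs < 1, let π_1,…,π_d be nonnegative reals with ∑_{i=1}^d π_i = 1, and let c_1,…,c_d be reals. Define h(c) = (1+tcb)·∑_{i=1}^d (c−c_i)^+·π_i − (1−tcs)·∑_{i=1}^d (c_i−c)^+·π_i. Then for all reals c ≤ c', one has (1−tcs)·(c'−c) ≤ h(c') − h(c) ≤ (1+tcb)·(c'−c). In particular, h is strictly increasing and (1+tcb)-Lipschitz continuous. -/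
private lemma term_bounds (tcb tcs : ℝ) (htcb0 : 0 ≤ tcb) (htcs0 : 0 ≤ tcs)
    (a c c' : ℝ) (hcc : c ≤ c') :
    (1 - tcs) * (c' - c) ≤
      ((1 + tcb) * max (c' - a) 0 - (1 - tcs) * max (a - c') 0)
        - ((1 + tcb) * max (c - a) 0 - (1 - tcs) * max (a - c) 0) ∧
      ((1 + tcb) * max (c' - a) 0 - (1 - tcs) * max (a - c') 0)
        - ((1 + tcb) * max (c - a) 0 - (1 - tcs) * max (a - c) 0)
        ≤ (1 + tcb) * (c' - c) := by
  have e1 : max (c - a) 0 - max (a - c) 0 = c - a := by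
    rcases le_total (c - a) 0 with h | h
    · rw [max_eq_right h, max_eq_left (by linarith)]; ring
    · rw [max_eq_left h, max_eq_right (by linarith)]; ring
  have e2 : max (c' - a) 0 - max (a - c') 0 = c' - a := by
    rcases le_total (c' - a) 0 with h | h
    · rw [max_eq_right h, max_eq_left (by linarith)]; ring
    · rw [max_eq_left h, max_eq_right (by linarith)]; ring
  have m1 : max (c - a) 0 ≤ max (c' - a) 0 :=
    max_le_max (by linarith) le_rfl
  have m2 : max (c' - a) 0 ≤ max (c - a) 0 + (c' - c) :=
    max_le (by linarith [le_max_left (c - a) (0:ℝ)])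
      (by linarith [le_max_right (c - a) (0:ℝ)])
  constructor <;> nlinarith [mul_nonneg (by linarith : (0:ℝ) ≤ tcb + tcs)
      (by linarith : (0:ℝ) ≤ max (c' - a) 0 - max (c - a) 0),
    mul_le_mul_of_nonneg_left (by linarith : max (c' - a) 0 - max (c - a) 0 ≤ c' - c)
      (by linarith : (0:ℝ) ≤ tcb + tcs)]

/-- Two-sided slope bounds for the rebalancing function `h`; in particular
`h` is strictly increasing and `(1+tcb)`-Lipschitz continuous. -/
theorem stmt_1 (d : ℕ) (hd : 2 ≤ d)
    (tcb tcs : ℝ) (htcb0 : 0 ≤ tcb) (htcs0 : 0 ≤ tcs) (htcs1 : tcs < 1)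
    (π cc : Fin d → ℝ) (hπ : ∀ i, 0 ≤ π i) (hπsum : ∑ i, π i = 1)
    (h : ℝ → ℝ)
    (hdef : ∀ c, h c =
      (1 + tcb) * ∑ i, max (c - cc i) 0 * π i
        - (1 - tcs) * ∑ i, max (cc i - c) 0 * π i) :
    (∀ c c' : ℝ, c ≤ c' →
        (1 - tcs) * (c' - c) ≤ h c' - h c ∧ h c' - h c ≤ (1 + tcb) * (c' - c))
      ∧ StrictMono h ∧ LipschitzWith (1 + tcb).toNNReal h := by
  have hrep : ∀ c, h c = ∑ i, ((1 + tcb) * max (c - cc i) 0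
      - (1 - tcs) * max (cc i - c) 0) * π i := by
    intro c
    rw [hdef c, Finset.mul_sum, Finset.mul_sum, ← Finset.sum_sub_distrib]
    congr 1; ext i; ring
  have main : ∀ c c' : ℝ, c ≤ c' →
      (1 - tcs) * (c' - c) ≤ h c' - h c ∧ h c' - h c ≤ (1 + tcb) * (c' - c) := by
    intro c c' hcc
    have hdiff : h c' - h c = ∑ i, (((1 + tcb) * max (c' - cc i) 0
        - (1 - tcs) * max (cc i - c') 0)
        - ((1 + tcb) * max (c - cc i) 0 - (1 - tcs) * max (cc i - c) 0)) * π i := by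
      rw [hrep, hrep, ← Finset.sum_sub_distrib]
      congr 1; ext i; ring
    constructor
    · calc (1 - tcs) * (c' - c) = ∑ i, (1 - tcs) * (c' - c) * π i := by
            rw [← Finset.mul_sum, hπsum, mul_one]
        _ ≤ _ := by
            rw [hdiff]
            refine Finset.sum_le_sum fun i _ => ?_
            exact mul_le_mul_of_nonneg_right
              ((term_bounds tcb tcs htcb0 htcs0 (cc i) c c' hcc).1) (hπ i)
    · calc h c' - h c ≤ ∑ i, (1 + tcb) * (c' - c) * π i := by
            rw [hdiff]
            refine Finset.sum_le_sum fun i _ => ?_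
            exact mul_le_mul_of_nonneg_right
              ((term_bounds tcb tcs htcb0 htcs0 (cc i) c c' hcc).2) (hπ i)
        _ = (1 + tcb) * (c' - c) := by rw [← Finset.mul_sum, hπsum, mul_one]
  refine ⟨main, ?_, ?_⟩
  · intro x y hxy
    have := (main x y hxy.le).1
    nlinarith
  · refine LipschitzWith.of_dist_le_mul fun x y => ?_
    rw [Real.dist_eq, Real.dist_eq, Real.coe_toNNReal _ (by linarith)]
    rcases le_total x y with hxy | hxy
    · obtain ⟨h1, h2⟩ := main x y hxy
      rw [abs_sub_comm x y]
      rw [abs_le, abs_of_nonneg (by linarith : (0:ℝ) ≤ y - x)]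
      constructor <;> nlinarith
    · obtain ⟨h1, h2⟩ := main y x hxy
      rw [abs_le, abs_of_nonneg (by linarith : (0:ℝ) ≤ x - y)]
      constructor <;> nlinarith
end

section
/- Let d ≥ 2 be an integer, let tcb, tcs be reals with 0 ≤ tcb and 0 ≤ tcs < 1, let π_1,…,π_d be nonnegative reals with ∑_{i=1}^d π_i = 1, let c_1,…,c_d be nonnegative reals, and let D̂ ≥ 0. Define h(c) = (1+tcb)·∑_{i=1}^d (c−c_i)^+·π_i − (1−tcs)·∑_{i=1}^d (c_i−c)^+·π_i. Then there exists exactly one real number c with h(c) = D̂. -/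
private lemma maxsub_aux (a b : ℝ) : max (a - b) 0 - max (b - a) 0 = a - b := by
  rcases le_total a b with h | h
  · rw [max_eq_right (by linarith), max_eq_left (by linarith)]; ring
  · rw [max_eq_left (by linarith), max_eq_right (by linarith)]; ring

/-- Existence and uniqueness of the solution of the self-financing
rebalancing equation `h c = D̂`. -/
theorem stmt_2 (d : ℕ) (hd : 2 ≤ d)
    (tcb tcs : ℝ) (htcb0 : 0 ≤ tcb) (htcs0 : 0 ≤ tcs) (htcs1 : tcs < 1)
    (π cc : Fin d → ℝ) (hπ : ∀ i, 0 ≤ π i) (hπsum : ∑ i, π i = 1)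
    (hcc : ∀ i, 0 ≤ cc i)
    (Dh : ℝ) (hDh : 0 ≤ Dh)
    (h : ℝ → ℝ)
    (hdef : ∀ c, h c =
      (1 + tcb) * ∑ i, max (c - cc i) 0 * π i
        - (1 - tcs) * ∑ i, max (cc i - c) 0 * π i) :
    ∃! c : ℝ, h c = Dh := by
  set m : ℝ := 1 - tcs with hm_def
  have hm : 0 < m := by simp only [hm_def]; linarith
  have hmM : m ≤ 1 + tcb := by simp only [hm_def]; linarith
  have hsum : ∀ c, h c =
      ∑ i, ((1 + tcb) * max (c - cc i) 0 - m * max (cc i - c) 0) * π i := by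
    intro c
    rw [hdef c, Finset.mul_sum, Finset.mul_sum, ← Finset.sum_sub_distrib]
    exact Finset.sum_congr rfl fun i _ => by ring
  -- strict monotonicity
  have hmono : StrictMono h := by
    intro x y hxy
    have key : ∀ i ∈ Finset.univ (α := Fin d),
        ((1 + tcb) * max (x - cc i) 0 - m * max (cc i - x) 0) * π i
          + m * (y - x) * π i
        ≤ ((1 + tcb) * max (y - cc i) 0 - m * max (cc i - y) 0) * π i := by
      intro i _
      have hA : max (x - cc i) 0 ≤ max (y - cc i) 0 :=
        max_le_max (by linarith) le_rfl
      have hx := maxsub_aux x (cc i)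
      have hy := maxsub_aux y (cc i)
      have hBsub : max (cc i - y) 0 =
          max (cc i - x) 0 + (max (y - cc i) 0 - max (x - cc i) 0) - (y - x) := by
        linarith
      have e : ((1 + tcb) * max (y - cc i) 0 - m * max (cc i - y) 0) * π i
          - (((1 + tcb) * max (x - cc i) 0 - m * max (cc i - x) 0) * π i
              + m * (y - x) * π i)
          = ((1 + tcb - m) * (max (y - cc i) 0 - max (x - cc i) 0)) * π i := by
        rw [hBsub]; ring
      have hnn : 0 ≤ ((1 + tcb - m) * (max (y - cc i) 0 - max (x - cc i) 0)) * π i :=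
        mul_nonneg (mul_nonneg (by linarith) (by linarith)) (hπ i)
      linarith
    have hsum' := Finset.sum_le_sum key
    rw [Finset.sum_add_distrib] at hsum'
    have hc1 : ∑ i : Fin d, m * (y - x) * π i = m * (y - x) := by
      rw [← Finset.mul_sum, hπsum, mul_one]
    rw [hc1] at hsum'
    rw [hsum x, hsum y]
    nlinarith [hsum', mul_pos hm (sub_pos.2 hxy)]
  -- continuity
  have hcont : Continuous h := by
    have : h = fun c => (1 + tcb) * ∑ i, max (c - cc i) 0 * π i
        - (1 - tcs) * ∑ i, max (cc i - c) 0 * π i := funext hdef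
    rw [this]
    apply Continuous.sub
    · exact continuous_const.mul (continuous_finset_sum _ fun i _ =>
        ((continuous_id.sub continuous_const).max continuous_const).mul continuous_const)
    · exact continuous_const.mul (continuous_finset_sum _ fun i _ =>
        ((continuous_const.sub continuous_id).max continuous_const).mul continuous_const)
  set S : ℝ := ∑ i, cc i * π i with hS_def
  have hS : 0 ≤ S :=
    Finset.sum_nonneg fun i _ => mul_nonneg (hcc i) (hπ i)
  -- lower bound at b
  set b : ℝ := S + Dh / m with hb_def
  have hb0 : 0 ≤ b := by positivity
  have hlow : Dh ≤ h b := by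
    rw [hsum b]
    have key : ∀ i ∈ Finset.univ (α := Fin d),
        m * (b - cc i) * π i
        ≤ ((1 + tcb) * max (b - cc i) 0 - m * max (cc i - b) 0) * π i := by
      intro i _
      have hb1 := maxsub_aux b (cc i)
      have h1 : (0:ℝ) ≤ max (b - cc i) 0 := le_max_right _ _
      have hB : max (cc i - b) 0 = max (b - cc i) 0 - (b - cc i) := by linarith
      have e : ((1 + tcb) * max (b - cc i) 0 - m * max (cc i - b) 0) * π i
          - m * (b - cc i) * π i = ((1 + tcb - m) * max (b - cc i) 0) * π i := by
        rw [hB]; ring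
      have hnn : 0 ≤ ((1 + tcb - m) * max (b - cc i) 0) * π i :=
        mul_nonneg (mul_nonneg (by linarith) h1) (hπ i)
      linarith
    have hle := Finset.sum_le_sum key
    have heq : ∑ i : Fin d, m * (b - cc i) * π i = m * b - m * S := by
      have e2 : ∑ i : Fin d, m * (b - cc i) * π i
          = ∑ i : Fin d, (m * b * π i - m * (cc i * π i)) :=
        Finset.sum_congr rfl fun i _ => by ring
      rw [e2, Finset.sum_sub_distrib, ← Finset.mul_sum, ← Finset.mul_sum, hπsum,
        mul_one, hS_def]
    have hbd : m * b - m * S = Dh := by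
      rw [hb_def]; field_simp; ring
    linarith
  -- upper bound at 0
  have hup : h 0 ≤ Dh := by
    rw [hsum 0]
    have h0 : ∑ i : Fin d, ((1 + tcb) * max (0 - cc i) 0 - m * max (cc i - 0) 0) * π i
        ≤ 0 := by
      apply Finset.sum_nonpos
      intro i _
      have e1 : max (0 - cc i) 0 = 0 := max_eq_right (by linarith [hcc i])
      rw [e1]
      have h2 : (0:ℝ) ≤ max (cc i - 0) 0 := le_max_right _ _
      have hnn : 0 ≤ m * max (cc i - 0) 0 * π i :=
        mul_nonneg (mul_nonneg hm.le h2) (hπ i)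
      nlinarith
    linarith
  obtain ⟨c, _, hc⟩ := intermediate_value_Icc hb0 hcont.continuousOn ⟨hup, hlow⟩
  exact ⟨c, hc, fun y hy => hmono.injective (hy.trans hc.symm)⟩
end

section
/- Let d ≥ 2 be an integer, let tcb, tcs be reals with 0 ≤ tcb and 0 ≤ tcs < 1, let π_1,…,π_d be nonnegative reals with ∑_{i=1}^d π_i = 1, and let c_1,…,c_d be reals. Define h(c) = (1+tcb)·∑_{i=1}^d (c−c_i)^+·π_i − (1−tcs)·∑_{i=1}^d (c_i−c)^+·π_i and D̂_j = h(c_j). Then for all i, k ∈ {1,…,d}, one has c_i ≤ c_k if and only if D̂_i ≤ D̂_k; that is, the family (D̂_i)_{i∈{1,…,d}} has the same ranking as (c_i)_{i∈{1,…,d}}. -/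
private lemma key_term (tcb tcs : ℝ) (htcb0 : 0 ≤ tcb) (htcs0 : 0 ≤ tcs) (htcs1 : tcs < 1)
    (x c c' : ℝ) (hcc : c ≤ c') :
    (1 - tcs) * (c' - c) ≤
      ((1 + tcb) * max (c' - x) 0 - (1 - tcs) * max (x - c') 0)
        - ((1 + tcb) * max (c - x) 0 - (1 - tcs) * max (x - c) 0) := by
  have h1 : max (c' - x) 0 - max (x - c') 0 = c' - x := by
    rcases le_total (c' - x) 0 with h | h
    · rw [max_eq_right h, max_eq_left (by linarith)]; ring
    · rw [max_eq_left h, max_eq_right (by linarith)]; ring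
  have h2 : max (c - x) 0 - max (x - c) 0 = c - x := by
    rcases le_total (c - x) 0 with h | h
    · rw [max_eq_right h, max_eq_left (by linarith)]; ring
    · rw [max_eq_left h, max_eq_right (by linarith)]; ring
  have h3 : max (c - x) 0 ≤ max (c' - x) 0 := by
    apply max_le_max <;> linarith
  have h4 : max (x - c') 0 ≤ max (x - c) 0 := by
    apply max_le_max <;> linarith
  have h5 : 0 ≤ (tcb + tcs) * (max (c' - x) 0 - max (c - x) 0) :=
    mul_nonneg (by linarith) (by linarith)
  nlinarith [h1, h2, h3, h4, h5]

/-- The family `(D̂_i)` has the same ranking as `(c_i)`. -/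
theorem stmt_3 (d : ℕ) (hd : 2 ≤ d)
    (tcb tcs : ℝ) (htcb0 : 0 ≤ tcb) (htcs0 : 0 ≤ tcs) (htcs1 : tcs < 1)
    (π cc : Fin d → ℝ) (hπ : ∀ i, 0 ≤ π i) (hπsum : ∑ i, π i = 1)
    (h : ℝ → ℝ)
    (hdef : ∀ c, h c =
      (1 + tcb) * ∑ i, max (c - cc i) 0 * π i
        - (1 - tcs) * ∑ i, max (cc i - c) 0 * π i)
    (Dhat : Fin d → ℝ) (hDhat : ∀ i, Dhat i = h (cc i)) :
    ∀ i k : Fin d, cc i ≤ cc k ↔ Dhat i ≤ Dhat k := by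
  have mono : ∀ c c' : ℝ, c ≤ c' → h c + (1 - tcs) * (c' - c) ≤ h c' := by
    intro c c' hcc
    rw [hdef, hdef]
    have hsum : ∀ i ∈ Finset.univ, (1 - tcs) * (c' - c) * π i ≤
        (((1 + tcb) * max (c' - cc i) 0 - (1 - tcs) * max (cc i - c') 0)
          - ((1 + tcb) * max (c - cc i) 0 - (1 - tcs) * max (cc i - c) 0)) * π i := by
      intro i _
      exact mul_le_mul_of_nonneg_right (key_term tcb tcs htcb0 htcs0 htcs1 (cc i) c c' hcc) (hπ i)
    have e1 : ∑ i, (((1 + tcb) * max (cc i - cc i + (c' - cc i)) 0) * 0) = 0 := by simp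
    clear e1
    have e2 : (∑ i, (1 - tcs) * (c' - c) * π i) = (1 - tcs) * (c' - c) := by
      rw [← Finset.mul_sum, hπsum, mul_one]
    have e3 : (∑ i, (((1 + tcb) * max (c' - cc i) 0 - (1 - tcs) * max (cc i - c') 0)
          - ((1 + tcb) * max (c - cc i) 0 - (1 - tcs) * max (cc i - c) 0)) * π i)
        = ((1 + tcb) * ∑ i, max (c' - cc i) 0 * π i
            - (1 - tcs) * ∑ i, max (cc i - c') 0 * π i)
          - ((1 + tcb) * ∑ i, max (c - cc i) 0 * π i
            - (1 - tcs) * ∑ i, max (cc i - c) 0 * π i) := by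
      rw [Finset.mul_sum, Finset.mul_sum, Finset.mul_sum, Finset.mul_sum,
        ← Finset.sum_sub_distrib, ← Finset.sum_sub_distrib, ← Finset.sum_sub_distrib]
      exact Finset.sum_congr rfl fun i _ => by ring
    have := Finset.sum_le_sum hsum
    rw [e2, e3] at this
    linarith
  intro i k
  constructor
  · intro hik
    rw [hDhat, hDhat]
    have := mono (cc i) (cc k) hik
    nlinarith [this]
  · intro hD
    by_contra hc
    push_neg at hc
    have := mono (cc k) (cc i) hc.le
    rw [hDhat, hDhat] at hD
    nlinarith [this, hc]
end

section
/- Let d ≥ 2 be an integer, let tcb, tcs be reals with 0 ≤ tcb and 0 ≤ tcs < 1, let π_1,…,π_d be nonnegative reals with ∑_{i=1}^d π_i = 1, let c_1,…,c_d be nonnegative reals, and let D̂ ≥ 0. Define h(c) = (1+tcb)·∑_{i=1}^d (c−c_i)^+·π_i − (1−tcs)·∑_{i=1}^d (c_i−c)^+·π_i and D̂_j = h(c_j). Suppose j ∈ {1,…,d} satisfies D̂_j ≤ D̂ and D̂_i ≤ D̂_j for every i with D̂_i ≤ D̂, and let c be a real with h(c) = D̂. Then c_j ≤ c, and for every i ∈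 {1,…,d} one has c_i ≤ c if and only if c_i ≤ c_j. -/
/-- The solution `c` of the rebalancing equation lies above `c_j`, and the
set of indices with `c_i ≤ c` agrees with the set of indices with `c_i ≤ c_j`. -/
theorem stmt_6 (d : ℕ) (hd : 2 ≤ d)
    (tcb tcs : ℝ) (htcb0 : 0 ≤ tcb) (htcs0 : 0 ≤ tcs) (htcs1 : tcs < 1)
    (π cc : Fin d → ℝ) (hπ : ∀ i, 0 ≤ π i) (hπsum : ∑ i, π i = 1)
    (hcc : ∀ i, 0 ≤ cc i)
    (Dh : ℝ) (hDh : 0 ≤ Dh)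
    (h : ℝ → ℝ)
    (hdef : ∀ c, h c =
      (1 + tcb) * ∑ i, max (c - cc i) 0 * π i
        - (1 - tcs) * ∑ i, max (cc i - c) 0 * π i)
    (Dhat : Fin d → ℝ) (hDhat : ∀ i, Dhat i = h (cc i))
    (j : Fin d) (hj1 : Dhat j ≤ Dh)
    (hj2 : ∀ i, Dhat i ≤ Dh → Dhat i ≤ Dhat j)
    (c : ℝ) (hc : h c = Dh) :
    cc j ≤ c ∧ ∀ i : Fin d, cc i ≤ c ↔ cc i ≤ cc j := by
  -- key quantitative monotonicity
  have key : ∀ a b : ℝ, a ≤ b → (1 - tcs) * (b - a) ≤ h b - h a := by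
    intro a b hab
    rw [hdef, hdef]
    have pt : ∀ i : Fin d, (1 - tcs) * (b - a) * π i ≤
        ((1 + tcb) * (max (b - cc i) 0 * π i) -
          (1 - tcs) * (max (cc i - b) 0 * π i)) -
        ((1 + tcb) * (max (a - cc i) 0 * π i) -
          (1 - tcs) * (max (cc i - a) 0 * π i)) := by
      intro i
      have hπi := hπ i
      rcases le_total a (cc i) with h1 | h1 <;> rcases le_total b (cc i) with h2 | h2
      · have e1 : max (a - cc i) 0 = 0 := max_eq_right (by linarith)
        have e2 : max (cc i - a) 0 = cc i - a := max_eq_left (by linarith)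
        have e3 : max (b - cc i) 0 = 0 := max_eq_right (by linarith)
        have e4 : max (cc i - b) 0 = cc i - b := max_eq_left (by linarith)
        rw [e1, e2, e3, e4]; exact le_of_eq (by ring)
      · have e1 : max (a - cc i) 0 = 0 := max_eq_right (by linarith)
        have e2 : max (cc i - a) 0 = cc i - a := max_eq_left (by linarith)
        have e3 : max (b - cc i) 0 = b - cc i := max_eq_left (by linarith)
        have e4 : max (cc i - b) 0 = 0 := max_eq_right (by linarith)
        rw [e1, e2, e3, e4]
        nlinarith [mul_nonneg (mul_nonneg (by linarith : (0:ℝ) ≤ tcb + tcs) (by linarith : (0:ℝ) ≤ b - cc i)) hπi]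
      · have hacc : a = cc i := by linarith
        have hbcc : b = cc i := by linarith
        subst hacc; rw [hbcc]; simp
      · have e1 : max (a - cc i) 0 = a - cc i := max_eq_left (by linarith)
        have e2 : max (cc i - a) 0 = 0 := max_eq_right (by linarith)
        have e3 : max (b - cc i) 0 = b - cc i := max_eq_left (by linarith)
        have e4 : max (cc i - b) 0 = 0 := max_eq_right (by linarith)
        rw [e1, e2, e3, e4]
        nlinarith [mul_nonneg (mul_nonneg (by linarith : (0:ℝ) ≤ tcb + tcs) (by linarith : (0:ℝ) ≤ b - a)) hπi]
    calc (1 - tcs) * (b - a)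
        = ∑ i : Fin d, (1 - tcs) * (b - a) * π i := by
          rw [← Finset.mul_sum, hπsum, mul_one]
      _ ≤ ∑ i : Fin d, (((1 + tcb) * (max (b - cc i) 0 * π i) -
            (1 - tcs) * (max (cc i - b) 0 * π i)) -
          ((1 + tcb) * (max (a - cc i) 0 * π i) -
            (1 - tcs) * (max (cc i - a) 0 * π i))) := Finset.sum_le_sum fun i _ => pt i
      _ = _ := by
          simp only [Finset.sum_sub_distrib, ← Finset.mul_sum]
  have reflect : ∀ a b : ℝ, h a ≤ h b → a ≤ b := by
    intro a b hab
    by_contra hba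
    push_neg at hba
    have := key b a hba.le
    nlinarith
  have hjc : cc j ≤ c := by
    apply reflect
    rw [← hDhat j, hc]; exact hj1
  refine ⟨hjc, fun i => ⟨fun hic => ?_, fun hij => le_trans hij hjc⟩⟩
  apply reflect
  rw [← hDhat i, ← hDhat j]
  apply hj2
  rw [hDhat i, ← hc]
  have := key (cc i) c hic
  nlinarith [mul_nonneg (show (0:ℝ) ≤ 1 - tcs by linarith) (show (0:ℝ) ≤ c - cc i by linarith)]
end
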